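/- arXiv:math/0608458 — 3 statements merged into one kernel-verified Lean document; each statement's English description precedes it below -/
import Mathlib

section
/- Let q be a prime power, F a finite field with q elements, n a positive integer, and V a 2n-dimensional F-vector space equipped with a nondegenerate alternating bilinear form B. Then the number of n-dimensional F-subspaces W of V that are totally isotropic for B (i.e., B(x,y) = 0 for all x, y in W) equals the product over i = 1, ..., n of (q^i + 1). -/
set_option linter.unusedSectionVars false

open Module Submodule

section Span
variable {F : Type*} [Field F]
variable {V : Type*} [AddCommGroup V] [Module F V] [FiniteDimensional F V]

lemma span_eq_of_mem {ℓ : Submodule F V} (h1 : finrank F ℓ = 1) {w : V} (hw : w ∈ ℓ)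
    (hw0 : w ≠ 0) : Submodule.span F {w} = ℓ := by
  apply Submodule.eq_of_le_of_finrank_eq
  · rwa [Submodule.span_le, Set.singleton_subset_iff]
  · rw [finrank_span_singleton hw0, h1]

end Span

section Lines
variable {F : Type*} [Field F] [Fintype F]
variable {V : Type*} [AddCommGroup V] [Module F V] [FiniteDimensional F V]

lemma card_lines_mul :
    Nat.card {ℓ : Submodule F V // finrank F ℓ = 1} * (Fintype.card F - 1)
      = Fintype.card F ^ finrank F V - 1 := by
  classical
  haveI : Finite V := Module.finite_of_finite F
  haveI : Fintype V := Fintype.ofFinite V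
  haveI : Finite (Submodule F V) := Finite.of_injective _ SetLike.coe_injective
  haveI : Fintype (Submodule F V) := Fintype.ofFinite _
  have key : Fintype.card {v : V // v ≠ 0}
      = Fintype.card {ℓ : Submodule F V // finrank F ℓ = 1} * (Fintype.card F - 1) := by
    let f : {v : V // v ≠ 0} → {ℓ : Submodule F V // finrank F ℓ = 1} :=
      fun v => ⟨Submodule.span F {v.1}, finrank_span_singleton v.2⟩
    rw [← Fintype.card_congr (Equiv.sigmaFiberEquiv f), Fintype.card_sigma]
    have : ∀ ℓ : {ℓ : Submodule F V // finrank F ℓ = 1},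
        Fintype.card {v // f v = ℓ} = Fintype.card F - 1 := by
      intro ℓ
      have e : {v // f v = ℓ} ≃ {w : ℓ.1 // w ≠ 0} := by
        refine ⟨fun v => ⟨⟨v.1.1, ?_⟩, ?_⟩, fun w => ⟨⟨w.1.1, ?_⟩, ?_⟩, ?_, ?_⟩
        · have := v.2
          have : v.1.1 ∈ Submodule.span F {v.1.1} := Submodule.mem_span_singleton_self _
          rw [show Submodule.span F {v.1.1} = ℓ.1 from congrArg Subtype.val v.2] at this
          exact this
        · simp only [ne_eq, Submodule.mk_eq_zero]; exact v.1.2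
        · simp only [ne_eq, Submodule.coe_eq_zero] at *
          exact fun h => w.2 (by exact_mod_cast h)
        · apply Subtype.ext
          simp only [f]
          exact span_eq_of_mem ℓ.2 w.1.2 (by simpa using w.2)
        · intro v; ext; rfl
        · intro w; ext; rfl
      rw [Fintype.card_congr e]
      have : Fintype.card ℓ.1 = Fintype.card F := by
        rw [card_eq_pow_finrank (K := F) (V := ℓ.1), ℓ.2, pow_one]
      rw [Fintype.card_subtype_compl, Fintype.card_subtype_eq, this]
    rw [Finset.sum_congr rfl (fun ℓ _ => this ℓ), Finset.sum_const, Finset.card_univ,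
      smul_eq_mul]
  have hV : Fintype.card V = Fintype.card F ^ finrank F V := card_eq_pow_finrank
  have h0 : Fintype.card {v : V // v ≠ 0} = Fintype.card V - 1 := by
    rw [Fintype.card_subtype_compl, Fintype.card_subtype_eq]
  rw [Nat.card_eq_fintype_card, ← key, h0, hV]

end Lines

section Lines2
variable {F : Type*} [Field F] [Fintype F]
variable {V : Type*} [AddCommGroup V] [Module F V] [FiniteDimensional F V]

lemma card_lines_le_mul (W : Submodule F V) :
    Nat.card {ℓ : Submodule F V // finrank F ℓ = 1 ∧ ℓ ≤ W} * (Fintype.card F - 1)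
      = Fintype.card F ^ finrank F W - 1 := by
  have e : {ℓ' : Submodule F W // finrank F ℓ' = 1}
      ≃ {ℓ : Submodule F V // finrank F ℓ = 1 ∧ ℓ ≤ W} :=
    { toFun := fun p => ⟨p.1.map W.subtype,
        by rw [Submodule.finrank_map_subtype_eq]; exact p.2, Submodule.map_subtype_le _ _⟩
      invFun := fun ℓ => ⟨ℓ.1.comap W.subtype,
        by rw [LinearEquiv.finrank_eq (Submodule.comapSubtypeEquivOfLe ℓ.2.2)]; exact ℓ.2.1⟩
      left_inv := fun p => by
        apply Subtype.ext
        simp only [Submodule.comap_map_eq, Submodule.ker_subtype, sup_bot_eq]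
      right_inv := fun ℓ => by
        apply Subtype.ext
        simp only [Submodule.map_comap_subtype]
        exact inf_eq_right.mpr ℓ.2.2 }
  rw [← Nat.card_congr e]
  exact card_lines_mul

end Lines2

section Step
variable {F : Type*} [Field F]
variable {V : Type*} [AddCommGroup V] [Module F V] [FiniteDimensional F V]

set_option maxHeartbeats 2000000 in
lemma quotient_step (B : V →ₗ[F] V →ₗ[F] F) (halt : ∀ x : V, B x x = 0)
    (hnd : ∀ x : V, (∀ y : V, B x y = 0) → x = 0) {n : ℕ}
    (hdim : finrank F V = 2 * n + 2) (ℓ : Submodule F V) (hℓ : finrank F ℓ = 1) :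
    ∃ (K : Submodule F V) (ℓ' : Submodule F K) (B' : (K ⧸ ℓ') →ₗ[F] (K ⧸ ℓ') →ₗ[F] F),
      (∀ z, B' z z = 0) ∧ (∀ z, (∀ w, B' z w = 0) → z = 0) ∧ finrank F (K ⧸ ℓ') = 2 * n ∧
      Nonempty
        ({W : Submodule F V //
            (finrank F W = n + 1 ∧ ∀ x ∈ W, ∀ y ∈ W, B x y = 0) ∧ ℓ ≤ W} ≃
          {W' : Submodule F (K ⧸ ℓ') //
            finrank F W' = n ∧ ∀ x ∈ W', ∀ y ∈ W', B' x y = 0}) := by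
  classical
  have hskew : ∀ u v : V, B u v = - B v u := by
    intro u v
    have h := halt (u + v)
    simp only [map_add, LinearMap.add_apply, halt u, halt v, zero_add, add_zero] at h
    linear_combination h
  obtain ⟨x, hxℓ, hx0⟩ : ∃ x ∈ ℓ, x ≠ 0 := by
    rw [← Submodule.ne_bot_iff]
    intro h
    rw [h, finrank_bot] at hℓ; exact absurd hℓ (by norm_num)
  have hℓx : ℓ = Submodule.span F {x} := (span_eq_of_mem hℓ hxℓ hx0).symm
  have hBx : B x ≠ 0 := fun h => hx0 (hnd x (fun y => by rw [h]; rfl))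
  set K : Submodule F V := LinearMap.ker (B x) with hKdef
  have hxK : x ∈ K := by simp [hKdef, LinearMap.mem_ker, halt x]
  have hmemK : ∀ v : V, v ∈ K ↔ B x v = 0 := fun v => LinearMap.mem_ker
  obtain ⟨v₀, hv₀⟩ : ∃ v, B x v ≠ 0 := by
    by_contra h
    push_neg at h
    exact hBx (LinearMap.ext h)
  have hK : finrank F K = 2 * n + 1 := by
    have hr := LinearMap.finrank_range_add_finrank_ker (B x)
    have hsurj : LinearMap.range (B x) = ⊤ := by
      rw [LinearMap.range_eq_top]
      intro c
      exact ⟨(c * (B x v₀)⁻¹) • v₀, by rw [map_smul, smul_eq_mul]; field_simp⟩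
    rw [hsurj, finrank_top, finrank_self, hdim, ← hKdef] at hr
    omega
  have hℓK : ℓ ≤ K := by
    rw [hℓx, Submodule.span_le, Set.singleton_subset_iff]
    exact hxK
  set ℓ' : Submodule F K := ℓ.comap K.subtype with hℓ'def
  have hmemℓ' : ∀ u : K, u ∈ ℓ' ↔ (u : V) ∈ ℓ := fun u => Iff.rfl
  have hℓ'1 : finrank F ℓ' = 1 := (LinearEquiv.finrank_eq (Submodule.comapSubtypeEquivOfLe hℓK)).trans hℓ
  have hBleft : ∀ (u z : K), (z : V) ∈ ℓ → B u z = 0 := by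
    intro u z hz
    rw [hℓx, Submodule.mem_span_singleton] at hz
    obtain ⟨c, hc⟩ := hz
    rw [← hc, map_smul, smul_eq_mul, hskew (u : V) x, (hmemK u).mp u.2]
    ring
  set Bk : K →ₗ[F] K →ₗ[F] F := B.domRestrict₁₂ K K with hBkdef
  have hBkapp : ∀ u v : K, Bk u v = B u v := fun u v => rfl
  have hker2 : ∀ u : K, ℓ' ≤ LinearMap.ker (Bk u) := by
    intro u z hz
    exact LinearMap.mem_ker.mpr (hBleft u z hz)
  set C : K →ₗ[F] (K ⧸ ℓ') →ₗ[F] F :=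
    { toFun := fun u => ℓ'.liftQ (Bk u) (hker2 u)
      map_add' := by
        intro u v
        apply Submodule.linearMap_qext
        ext w
        simp [LinearMap.domRestrict₁₂_apply]
      map_smul' := by
        intro c u
        apply Submodule.linearMap_qext
        ext w
        simp [LinearMap.domRestrict₁₂_apply] } with hCdef
  have hCapp : ∀ (u v : K), C u (Submodule.Quotient.mk v) = B u v := fun u v => rfl
  have hCl : ℓ' ≤ LinearMap.ker C := by
    intro u hu
    rw [LinearMap.mem_ker]
    apply Submodule.linearMap_qext
    ext w
    have : B x w = 0 := (hmemK w).mp w.2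
    rw [hmemℓ', hℓx, Submodule.mem_span_singleton] at hu
    obtain ⟨c, hc⟩ := hu
    have hc' : (u : V) = c • x := hc.symm
    simp only [LinearMap.comp_apply, LinearMap.zero_apply, LinearMap.zero_comp]
    show C u (Submodule.Quotient.mk w) = 0
    rw [hCapp, hc', map_smul, LinearMap.smul_apply, this, smul_zero]
  set B' : (K ⧸ ℓ') →ₗ[F] (K ⧸ ℓ') →ₗ[F] F := ℓ'.liftQ C hCl with hB'def
  have hB'mk : ∀ u v : K, B' (Submodule.Quotient.mk u) (Submodule.Quotient.mk v) = B u v :=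
    fun u v => rfl
  have mksurj := Submodule.Quotient.mk_surjective ℓ'
  have halt' : ∀ z : K ⧸ ℓ', B' z z = 0 := by
    intro z
    obtain ⟨u, rfl⟩ := mksurj z
    rw [hB'mk]; exact halt u
  have hnd' : ∀ z : K ⧸ ℓ', (∀ w, B' z w = 0) → z = 0 := by
    intro z hz
    obtain ⟨u, rfl⟩ := mksurj z
    rw [Submodule.Quotient.mk_eq_zero]
    have hu : ∀ w : K, B u w = 0 := by
      intro w
      have := hz (Submodule.Quotient.mk w)
      rwa [hB'mk] at this
    obtain ⟨c, hc⟩ : ∃ c : F, B (u : V) = c • B x := by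
      refine ⟨B u v₀ / B x v₀, ?_⟩
      ext w
      have hw : w - (B x w / B x v₀) • v₀ ∈ K := by
        rw [hmemK, map_sub, map_smul, smul_eq_mul]
        field_simp
        simp
      have h2 : B (u : V) (w - (B x w / B x v₀) • v₀) = 0 := hu ⟨_, hw⟩
      rw [map_sub, map_smul, smul_eq_mul, sub_eq_zero] at h2
      rw [LinearMap.smul_apply, smul_eq_mul, h2]
      field_simp
    have hsub : (u : V) - c • x = 0 := by
      apply hnd
      intro y
      rw [map_sub, map_smul, LinearMap.sub_apply, hc]
      simp
    rw [hmemℓ', hℓx]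
    exact Submodule.mem_span_singleton.mpr ⟨c, (sub_eq_zero.mp hsub).symm⟩
  have hQdim : finrank F (K ⧸ ℓ') = 2 * n := by
    have h := Submodule.finrank_quotient_add_finrank ℓ'
    rw [hℓ'1, hK] at h
    omega
  have hrank_map : ∀ U : Submodule F K, ℓ' ≤ U →
      finrank F (U.map ℓ'.mkQ) + 1 = finrank F U := by
    intro U hU
    have h1 := LinearMap.finrank_range_add_finrank_ker (ℓ'.mkQ.comp U.subtype)
    have h2 : LinearMap.range (ℓ'.mkQ.comp U.subtype) = U.map ℓ'.mkQ := by
      rw [LinearMap.range_comp, Submodule.range_subtype]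
    have h3 : LinearMap.ker (ℓ'.mkQ.comp U.subtype) = ℓ'.comap U.subtype := by
      rw [LinearMap.ker_comp, Submodule.ker_mkQ]
    rw [h2, h3] at h1
    have h4 : finrank F (ℓ'.comap U.subtype) = 1 :=
      (LinearEquiv.finrank_eq (Submodule.comapSubtypeEquivOfLe hU)).trans hℓ'1
    omega
  have hWK : ∀ W : Submodule F V, (∀ x ∈ W, ∀ y ∈ W, B x y = 0) → ℓ ≤ W → W ≤ K := by
    intro W hiso hlW w hw
    rw [hmemK]
    exact hiso x (hlW hxℓ) w hw
  have hℓ'U : ∀ (W : Submodule F V), ℓ ≤ W → ℓ' ≤ W.comap K.subtype := by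
    intro W hlW z hz
    exact hlW ((hmemℓ' z).mp hz)
  refine ⟨K, ℓ', B', halt', hnd', hQdim, ⟨?_⟩⟩
  refine
    { toFun := fun W => ⟨(W.1.comap K.subtype).map ℓ'.mkQ, ?_, ?_⟩
      invFun := fun U' => ⟨(U'.1.comap ℓ'.mkQ).map K.subtype, ⟨?_, ?_⟩, ?_⟩
      left_inv := ?_
      right_inv := ?_ }
  · -- finrank of image = n
    have h1 := hrank_map (W.1.comap K.subtype) (hℓ'U W.1 W.2.2)
    have h2 : finrank F (W.1.comap K.subtype) = n + 1 :=
      (LinearEquiv.finrank_eq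
        (Submodule.comapSubtypeEquivOfLe (hWK W.1 W.2.1.2 W.2.2))).trans W.2.1.1
    omega
  · -- isotropic
    intro z hz z' hz'
    rw [Submodule.mem_map] at hz hz'
    obtain ⟨u, hu, rfl⟩ := hz
    obtain ⟨v, hv, rfl⟩ := hz'
    rw [Submodule.mkQ_apply, Submodule.mkQ_apply, hB'mk]
    exact W.2.1.2 u.1 hu v.1 hv
  · -- finrank of preimage = n + 1
    have hle : ℓ' ≤ U'.1.comap ℓ'.mkQ := by
      intro z hz
      rw [Submodule.mem_comap, Submodule.mkQ_apply, (Submodule.Quotient.mk_eq_zero ℓ').mpr hz]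
      exact U'.1.zero_mem
    have h1 := hrank_map (U'.1.comap ℓ'.mkQ) hle
    have h3 : finrank F ((U'.1.comap ℓ'.mkQ).map ℓ'.mkQ) = n := by
      rw [Submodule.map_comap_eq_of_surjective (Submodule.mkQ_surjective ℓ') U'.1]
      exact U'.2.1
    rw [Submodule.finrank_map_subtype_eq]
    omega
  · -- isotropic
    intro a ha b hb
    rw [Submodule.mem_map] at ha hb
    obtain ⟨u, hu, rfl⟩ := ha
    obtain ⟨v, hv, rfl⟩ := hb
    have := U'.2.2 (Submodule.Quotient.mk u) hu (Submodule.Quotient.mk v) hv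
    rwa [hB'mk] at this
  · -- ℓ ≤ preimage
    intro v hv
    rw [Submodule.mem_map]
    refine ⟨⟨v, hℓK hv⟩, ?_, rfl⟩
    rw [Submodule.mem_comap]
    have hz : (⟨v, hℓK hv⟩ : K) ∈ ℓ' := hv
    rw [Submodule.mkQ_apply, (Submodule.Quotient.mk_eq_zero ℓ').mpr hz]
    exact U'.1.zero_mem
  · -- left inverse
    intro W
    apply Subtype.ext
    show (((W.1.comap K.subtype).map ℓ'.mkQ).comap ℓ'.mkQ).map K.subtype = W.1
    rw [Submodule.comap_map_mkQ, sup_eq_right.mpr (hℓ'U W.1 W.2.2),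
      Submodule.map_comap_subtype]
    exact inf_eq_right.mpr (hWK W.1 W.2.1.2 W.2.2)
  · -- right inverse
    intro U'
    apply Subtype.ext
    show (((U'.1.comap ℓ'.mkQ).map K.subtype).comap K.subtype).map ℓ'.mkQ = U'.1
    rw [Submodule.comap_map_eq, Submodule.ker_subtype, sup_bot_eq,
      Submodule.map_comap_eq_of_surjective (Submodule.mkQ_surjective ℓ')]

end Step

universe u

lemma lag_card (F : Type*) [Field F] [Fintype F] :
    ∀ (n : ℕ) (V : Type u) [AddCommGroup V] [Module F V] [FiniteDimensional F V]
      (B : V →ₗ[F] V →ₗ[F] F), (∀ x, B x x = 0) → (∀ x, (∀ y, B x y = 0) → x = 0) →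
      finrank F V = 2 * n →
      Nat.card {W : Submodule F V // finrank F W = n ∧ ∀ x ∈ W, ∀ y ∈ W, B x y = 0}
        = ∏ i ∈ Finset.range n, (Fintype.card F ^ (i + 1) + 1) := by
  intro n
  induction n with
  | zero =>
    intro V _ _ _ B halt hnd hdim
    rw [mul_zero] at hdim
    have hsub : Subsingleton V := Module.finrank_zero_iff.mp hdim
    have hne : Nonempty {W : Submodule F V //
        finrank F W = 0 ∧ ∀ x ∈ W, ∀ y ∈ W, B x y = 0} :=
      ⟨⟨⊥, finrank_bot F V, fun x hx y _ => by
        rw [(Submodule.mem_bot F).mp hx]; simp⟩⟩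
    haveI hss : Subsingleton (Submodule F V) :=
      ⟨fun a b => by ext v; rw [Subsingleton.elim v 0]; simp⟩
    rw [Finset.range_zero, Finset.prod_empty]
    exact Nat.card_eq_one_iff_unique.mpr ⟨inferInstance, hne⟩
  | succ m IH =>
    intro V _ _ _ B halt hnd hdim
    classical
    haveI : Finite V := Module.finite_of_finite F
    haveI : Finite (Submodule F V) := Finite.of_injective _ SetLike.coe_injective
    have hq2 : 2 ≤ Fintype.card F := Fintype.one_lt_card
    set q := Fintype.card F with hq
    set P := ∏ i ∈ Finset.range m, (q ^ (i + 1) + 1) with hP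
    have key : ∀ ℓ : Submodule F V, finrank F ℓ = 1 →
        Nat.card {W : Submodule F V //
          (finrank F W = m + 1 ∧ ∀ x ∈ W, ∀ y ∈ W, B x y = 0) ∧ ℓ ≤ W} = P := by
      intro ℓ hℓ1
      obtain ⟨K, ℓ', B', halt', hnd', hQdim, ⟨e⟩⟩ :=
        quotient_step B halt hnd (n := m) (by omega) ℓ hℓ1
      rw [Nat.card_congr e]
      exact IH (K ⧸ ℓ') B' halt' hnd' hQdim
    set Lin := {ℓ : Submodule F V // finrank F ℓ = 1} with hLin
    set Lag := {W : Submodule F V //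
      finrank F W = m + 1 ∧ ∀ x ∈ W, ∀ y ∈ W, B x y = 0} with hLag
    haveI : Fintype Lin := Fintype.ofFinite _
    haveI : Fintype Lag := Fintype.ofFinite _
    set T := {p : Lin × Lag // p.1.1 ≤ p.2.1} with hT
    haveI : Fintype T := Fintype.ofFinite _
    have e1 : T ≃ Σ ℓ : Lin, {W : Lag // ℓ.1 ≤ W.1} :=
      Equiv.subtypeProdEquivSigmaSubtype (fun (ℓ : Lin) (W : Lag) => ℓ.1 ≤ W.1)
    have e2 : T ≃ Σ W : Lag, {ℓ : Lin // ℓ.1 ≤ W.1} :=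
      ((Equiv.prodComm Lin Lag).subtypeEquiv (fun p => Iff.rfl)).trans
        (Equiv.subtypeProdEquivSigmaSubtype fun (W : Lag) (ℓ : Lin) => ℓ.1 ≤ W.1)
    have hcard1 : Fintype.card T = Fintype.card Lin * P := by
      rw [Fintype.card_congr e1, Fintype.card_sigma]
      have : ∀ ℓ : Lin, Fintype.card {W : Lag // ℓ.1 ≤ W.1} = P := by
        intro ℓ
        rw [← Nat.card_eq_fintype_card]
        exact (Nat.card_congr (Equiv.subtypeSubtypeEquivSubtypeInter
          (fun W : Submodule F V =>
            finrank F W = m + 1 ∧ ∀ x ∈ W, ∀ y ∈ W, B x y = 0)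
          (fun t => ℓ.1 ≤ t))).trans (key ℓ.1 ℓ.2)
      rw [Finset.sum_congr rfl (fun ℓ _ => this ℓ), Finset.sum_const, Finset.card_univ,
        smul_eq_mul]
    have hcard2 : Fintype.card T * (q - 1) = Fintype.card Lag * (q ^ (m + 1) - 1) := by
      rw [Fintype.card_congr e2, Fintype.card_sigma, Finset.sum_mul]
      have : ∀ W : Lag, Fintype.card {ℓ : Lin // ℓ.1 ≤ W.1} * (q - 1)
          = q ^ (m + 1) - 1 := by
        intro W
        rw [← Nat.card_eq_fintype_card]
        have hc : Nat.card {ℓ : Lin // ℓ.1 ≤ W.1}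
            = Nat.card {ℓ : Submodule F V // finrank F ℓ = 1 ∧ ℓ ≤ W.1} :=
          Nat.card_congr (Equiv.subtypeSubtypeEquivSubtypeInter
            (fun ℓ : Submodule F V => finrank F ℓ = 1) (fun t => t ≤ W.1))
        rw [hc]
        have := card_lines_le_mul (F := F) W.1
        rwa [W.2.1] at this
      rw [Finset.sum_congr rfl (fun W _ => this W), Finset.sum_const, Finset.card_univ,
        smul_eq_mul]
    have hlines : Fintype.card Lin * (q - 1) = q ^ (2 * (m + 1)) - 1 := by
      rw [← Nat.card_eq_fintype_card]
      have := card_lines_mul (F := F) (V := V)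
      rwa [hdim] at this
    -- combine
    have ha2 : 2 ≤ q ^ (m + 1) := le_trans hq2 (Nat.le_self_pow (Nat.succ_ne_zero m) q)
    have hfact : q ^ (2 * (m + 1)) - 1 = (q ^ (m + 1) - 1) * (q ^ (m + 1) + 1) := by
      have hpow : q ^ (2 * (m + 1)) = q ^ (m + 1) * q ^ (m + 1) := by
        rw [two_mul, pow_add]
      obtain ⟨b, hb⟩ : ∃ b, q ^ (m + 1) = b + 2 := ⟨q ^ (m + 1) - 2, by omega⟩
      have hb1 : b + 2 - 1 = b + 1 := by omega
      rw [hpow, hb, hb1]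
      have h1 : (b + 2) * (b + 2) = b * b + 4 * b + 4 := by ring
      have h2 : (b + 1) * (b + 2 + 1) = b * b + 4 * b + 3 := by ring
      omega
    have hmain : Nat.card Lag * (q ^ (m + 1) - 1)
        = (P * (q ^ (m + 1) + 1)) * (q ^ (m + 1) - 1) := by
      rw [Nat.card_eq_fintype_card, ← hcard2, hcard1, mul_right_comm, hlines, hfact]
      ring
    have hpos : 0 < q ^ (m + 1) - 1 := by omega
    have := Nat.eq_of_mul_eq_mul_right hpos hmain
    rw [Finset.prod_range_succ, ← hP]
    exact this

/-- The number of Lagrangian (n-dimensional totally isotropic) subspaces of a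
2n-dimensional symplectic space over F_q is ∏_{i=1}^n (q^i + 1). -/
theorem stmt_0 (q n : ℕ) (hq : IsPrimePow q) (hn : 0 < n)
    (F : Type*) [Field F] [Fintype F] (hF : Fintype.card F = q)
    (V : Type*) [AddCommGroup V] [Module F V] [FiniteDimensional F V]
    (hdim : Module.finrank F V = 2 * n)
    (B : V →ₗ[F] V →ₗ[F] F)
    (halt : ∀ x : V, B x x = 0)
    (hnd : ∀ x : V, (∀ y : V, B x y = 0) → x = 0) :
    Nat.card {W : Submodule F V //
        Module.finrank F W = n ∧ ∀ x ∈ W, ∀ y ∈ W, B x y = 0} =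
      ∏ i ∈ Finset.range n, (q ^ (i + 1) + 1) := by
  have h := lag_card F n V B halt hnd hdim
  rwa [hF] at h
end

section
/- Let q be a prime power, F a finite field with q² elements, and m a positive integer. Then the number of m-tuples (a_1, ..., a_m) in F^m satisfying a_1^{q+1} + a_2^{q+1} + ... + a_m^{q+1} = 0 equals q^{2m-1} + (-1)^m q^m + (-1)^{m-1} q^{m-1}. -/
open Finset Polynomial

section AuxHermitian

lemma aux_fiber_le {F : Type*} [Field F] [Fintype F] [DecidableEq F] {n : ℕ} (hn : 0 < n) (d : F) :
    (univ.filter fun x : F => x ^ n = d).card ≤ n := by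
  calc (univ.filter fun x : F => x ^ n = d).card
      ≤ (nthRoots n d).toFinset.card := Finset.card_le_card (fun x hx => by
        simp only [Multiset.mem_toFinset, mem_nthRoots hn]
        simpa using hx)
    _ ≤ Multiset.card (nthRoots n d) := Multiset.toFinset_card_le _
    _ ≤ n := Polynomial.card_nthRoots n d

lemma fiber_card {q : ℕ} (hq2 : 2 ≤ q) {F : Type*} [Field F] [Fintype F] [DecidableEq F]
    (hF : Fintype.card F = q ^ 2) {c : F} (hc : c ≠ 0) (hc1 : c ^ (q - 1) = 1) :
    (univ.filter fun x : F => x ^ (q + 1) = c).card = q + 1 := by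
  set T : Finset F := univ.filter fun c : F => c ^ (q - 1) = 1 ∧ c ≠ 0 with hT
  have hmul : (q + 1) * (q - 1) = q ^ 2 - 1 := by
    zify [show 1 ≤ q by omega, show 1 ≤ q ^ 2 by nlinarith]
    ring
  have hTcard : T.card ≤ q - 1 := by
    calc T.card ≤ (univ.filter fun c : F => c ^ (q - 1) = 1).card :=
          Finset.card_le_card (fun x hx => by
            simp only [hT, mem_filter] at hx ⊢; exact ⟨hx.1, hx.2.1⟩)
      _ ≤ q - 1 := aux_fiber_le (by omega) 1
  -- partition nonzero elements by their (q+1)-th power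
  have hsum : (univ.filter fun x : F => x ≠ 0).card
      = ∑ d ∈ T, ((univ.filter fun x : F => x ≠ 0).filter fun x => x ^ (q + 1) = d).card := by
    apply Finset.card_eq_sum_card_fiberwise
    intro x hx
    simp only [mem_coe, mem_filter, mem_univ, true_and] at hx
    simp only [hT, mem_coe, mem_filter, mem_univ, true_and]
    constructor
    · rw [← pow_mul, hmul, ← hF]
      exact FiniteField.pow_card_sub_one_eq_one x hx
    · exact pow_ne_zero _ hx
  have hfib : ∀ d ∈ T, ((univ.filter fun x : F => x ≠ 0).filter fun x => x ^ (q + 1) = d)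
      = univ.filter fun x : F => x ^ (q + 1) = d := by
    intro d hd
    simp only [hT, mem_filter, mem_univ, true_and] at hd
    ext x
    simp only [mem_filter, mem_univ, true_and]
    constructor
    · rintro ⟨hx0, hxe⟩; exact hxe
    · intro hxe
      refine ⟨?_, hxe⟩
      rintro rfl
      exact hd.2 (by rw [← hxe, zero_pow (by omega)])
  have hsum' : q ^ 2 - 1 = ∑ d ∈ T, (univ.filter fun x : F => x ^ (q + 1) = d).card := by
    have hcnt : (univ.filter fun x : F => x ≠ 0).card = q ^ 2 - 1 := by
      have : (univ.filter fun x : F => x ≠ 0) = univ.erase 0 := by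
        ext x; simp [eq_comm]
      rw [this, Finset.card_erase_of_mem (mem_univ 0), Finset.card_univ, hF]
    rw [← hcnt, hsum]
    exact Finset.sum_congr rfl (fun d hd => by rw [hfib d hd])
  have hub : ∀ d ∈ T, (univ.filter fun x : F => x ^ (q + 1) = d).card ≤ q + 1 :=
    fun d _ => aux_fiber_le (by omega) d
  have hge : T.card * (q + 1) ≥ q ^ 2 - 1 := by
    calc q ^ 2 - 1 = ∑ d ∈ T, (univ.filter fun x : F => x ^ (q + 1) = d).card := hsum'
      _ ≤ ∑ d ∈ T, (q + 1) := Finset.sum_le_sum hub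
      _ = T.card * (q + 1) := by rw [Finset.sum_const, smul_eq_mul]
  have hTeq : T.card * (q + 1) = q ^ 2 - 1 := by
    have : T.card * (q + 1) ≤ (q - 1) * (q + 1) := Nat.mul_le_mul_right _ hTcard
    rw [mul_comm (q-1)] at this; omega
  have heq : ∑ d ∈ T, (univ.filter fun x : F => x ^ (q + 1) = d).card
      = ∑ d ∈ T, (q + 1) := by
    rw [← hsum', Finset.sum_const, smul_eq_mul, hTeq]
  have := (Finset.sum_eq_sum_iff_of_le hub).mp heq
  have hcT : c ∈ T := by simp [hT, hc1, hc]
  exact this c hcT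

section
variable {q : ℕ} (hq2 : 2 ≤ q) {F : Type*} [Field F] [Fintype F] [DecidableEq F]
  (hF : Fintype.card F = q ^ 2)
  (hfrob : ∀ x y : F, (x + y) ^ q = x ^ q + y ^ q)

include hF hfrob in
-- sums of (q+1)-th powers are fixed by x ↦ x^q
lemma sum_pow_fixed (m : ℕ) (a : Fin m → F) :
    (∑ i, a i ^ (q + 1)) ^ q = ∑ i, a i ^ (q + 1) := by
  let f : F →+ F := AddMonoidHom.mk' (fun x => x ^ q) hfrob
  have hterm : ∀ x : F, (x ^ (q + 1)) ^ q = x ^ (q + 1) := by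
    intro x
    have h1 : (x ^ (q + 1)) ^ q = x ^ (q ^ 2) * x ^ q := by
      rw [← pow_mul, ← pow_add]; ring_nf
    have h2 : x ^ (q ^ 2) = x := by rw [← hF, FiniteField.pow_card]
    rw [h1, h2, ← pow_succ']
  calc (∑ i, a i ^ (q + 1)) ^ q = f (∑ i, a i ^ (q + 1)) := rfl
    _ = ∑ i, f (a i ^ (q + 1)) := map_sum f _ _
    _ = ∑ i, a i ^ (q + 1) := Finset.sum_congr rfl (fun i _ => hterm (a i))

include hq2 hF hfrob in
lemma inner_count (c : F) (hcq : c ^ q = c) :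
    (∑ x : F, if x ^ (q + 1) + c = 0 then 1 else 0) =
      if c = 0 then 1 else q + 1 := by
  have hsum : (∑ x : F, if x ^ (q + 1) + c = 0 then 1 else 0)
      = (univ.filter fun x : F => x ^ (q + 1) = -c).card := by
    rw [Finset.card_filter]
    apply Finset.sum_congr rfl
    intro x _
    congr 1
    exact propext ⟨fun h => by linear_combination h, fun h => by linear_combination h⟩
  rw [hsum]
  by_cases h0 : c = 0
  · rw [if_pos h0, h0, neg_zero]
    rw [Finset.card_eq_one]
    refine ⟨0, ?_⟩
    ext x
    simp [pow_eq_zero_iff, Nat.succ_ne_zero]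
  · rw [if_neg h0]
    have hne : (-c) ≠ 0 := neg_ne_zero.mpr h0
    have hnegq : (-c) ^ q = -c := by
      have h := hfrob c (-c)
      rw [add_neg_cancel, zero_pow (show q ≠ 0 by omega), hcq] at h
      linear_combination -h
    have hq1 : q - 1 + 1 = q := by omega
    have hmul2 : (-c) ^ (q - 1) * (-c) = 1 * (-c) := by
      rw [← pow_succ, hq1, hnegq, one_mul]
    exact fiber_card hq2 hF hne (mul_right_cancel₀ hne hmul2)

include hq2 hF hfrob in
lemma key_rec (m : ℕ) :
    (univ.filter fun a : Fin (m + 1) → F => ∑ i, a i ^ (q + 1) = 0).card =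
      (univ.filter fun a : Fin m → F => ∑ i, a i ^ (q + 1) = 0).card
      + (univ.filter fun a : Fin m → F => ¬ (∑ i, a i ^ (q + 1) = 0)).card * (q + 1) := by
  have step1 : (univ.filter fun a : Fin (m + 1) → F => ∑ i, a i ^ (q + 1) = 0).card =
      (univ.filter fun p : F × (Fin m → F) =>
        p.1 ^ (q + 1) + ∑ i, p.2 i ^ (q + 1) = 0).card := by
    apply Finset.card_nbij' (fun a => (a 0, fun i => a i.succ)) (fun p => Fin.cons p.1 p.2)
    · intro a ha
      simp only [mem_coe, mem_filter, mem_univ, true_and] at ha ⊢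
      rw [← Fin.sum_univ_succ (fun i => a i ^ (q + 1))]; exact ha
    · intro p hp
      simp only [mem_coe, mem_filter, mem_univ, true_and] at hp ⊢
      rw [Fin.sum_univ_succ]
      simpa using hp
    · intro a _
      ext i
      exact congrFun (Fin.cons_self_tail a) i
    · intro p _; simp
  rw [step1, Finset.card_filter, Fintype.sum_prod_type_right]
  calc (∑ a : Fin m → F, ∑ x : F, if x ^ (q + 1) + ∑ i, a i ^ (q + 1) = 0 then 1 else 0)
      = ∑ a : Fin m → F, if (∑ i, a i ^ (q + 1)) = 0 then 1 else q + 1 :=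
        Finset.sum_congr rfl (fun a _ =>
          inner_count hq2 hF hfrob _ (sum_pow_fixed hF hfrob m a))
    _ = _ := by
        rw [Finset.sum_ite, Finset.sum_const, Finset.sum_const, smul_eq_mul, smul_eq_mul,
          mul_one]

end

/-- The number of m-tuples over F_{q²} with a_1^{q+1} + ⋯ + a_m^{q+1} = 0 equals
q^{2m-1} + (-1)^m q^m + (-1)^{m-1} q^{m-1}. -/
theorem stmt_1 (q m : ℕ) (hq : IsPrimePow q) (hm : 0 < m)
    (F : Type*) [Field F] [Fintype F] (hF : Fintype.card F = q ^ 2) :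
    (Nat.card {a : Fin m → F // ∑ i, (a i) ^ (q + 1) = 0} : ℤ) =
      (q : ℤ) ^ (2 * m - 1) + (-1) ^ m * (q : ℤ) ^ m + (-1) ^ (m - 1) * (q : ℤ) ^ (m - 1) := by
  classical
  have hq2 : 2 ≤ q := hq.two_le
  -- get the Frobenius property
  obtain ⟨p, n, hp, hn, rfl⟩ := hq
  rw [← Nat.prime_iff] at hp
  have hpF : CharP F p := by
    obtain ⟨r, hr⟩ := CharP.exists F
    haveI := hr
    obtain ⟨k, hrp, hcard⟩ := FiniteField.card F r
    have : r = p := by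
      have hdvd : r ∣ p ^ (n * 2) := by
        refine Dvd.intro (r ^ ((k:ℕ) - 1)) ?_
        have : (p ^ n) ^ 2 = p ^ (n * 2) := by rw [← pow_mul]
        rw [← this, ← hF, hcard, ← pow_succ']
        congr 1
        have : (0:ℕ) < (k:ℕ) := k.pos
        omega
      have := (Nat.Prime.dvd_of_dvd_pow hrp hdvd)
      exact (Nat.prime_dvd_prime_iff_eq hrp hp).mp this
    subst this; exact hr
  haveI := hpF
  haveI : Fact p.Prime := ⟨hp⟩
  have hfrob : ∀ x y : F, (x + y) ^ p ^ n = x ^ p ^ n + y ^ p ^ n := fun x y =>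
    add_pow_char_pow (R := F) (p := p) (n := n) (x := x) (y := y)
  set Q : ℕ := p ^ n with hQ
  -- the counting function
  have main : ∀ k : ℕ, ((univ.filter fun a : Fin (k + 1) → F =>
      ∑ i, a i ^ (Q + 1) = 0).card : ℤ) =
      (Q : ℤ) ^ (2 * k + 1) + (-1) ^ (k + 1) * (Q : ℤ) ^ (k + 1) + (-1) ^ k * (Q : ℤ) ^ k := by
    intro k
    induction k with
    | zero =>
      have : (univ.filter fun a : Fin 1 → F => ∑ i, a i ^ (Q + 1) = 0) = {fun _ => 0} := by
        ext a
        simp only [mem_filter, mem_univ, true_and, Fin.sum_univ_one, mem_singleton,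
          pow_eq_zero_iff (show Q + 1 ≠ 0 by omega), funext_iff, Fin.forall_fin_one]
      rw [this, Finset.card_singleton]
      push_cast
      ring
    | succ k ih =>
      have hrec := key_rec hq2 hF hfrob (k + 1)
      have htot : (univ.filter fun a : Fin (k + 1) → F => ∑ i, a i ^ (Q + 1) = 0).card
          + (univ.filter fun a : Fin (k + 1) → F => ¬ (∑ i, a i ^ (Q + 1) = 0)).card
          = Q ^ (2 * (k + 1)) := by
        rw [Finset.card_filter_add_card_filter_not, Finset.card_univ,
          Fintype.card_fun, hF, Fintype.card_fin, ← pow_mul, mul_comm 2 (k + 1)]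
      rw [hrec]
      push_cast at ih htot ⊢
      have hneg : ((univ.filter fun a : Fin (k + 1) → F => ¬ (∑ i, a i ^ (Q + 1) = 0)).card : ℤ)
          = (Q : ℤ) ^ (2 * (k + 1)) - ((univ.filter fun a : Fin (k + 1) → F =>
            ∑ i, a i ^ (Q + 1) = 0).card : ℤ) := by linarith
      rw [hneg, ih]
      ring
  obtain ⟨k, rfl⟩ : ∃ k, m = k + 1 := ⟨m - 1, by omega⟩
  rw [Nat.card_eq_fintype_card, Fintype.card_subtype]
  rw [main k]
  have h1 : 2 * (k + 1) - 1 = 2 * k + 1 := by omega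
  have h2 : k + 1 - 1 = k := by omega
  rw [h1, h2]

end AuxHermitian
end

section
/- Let q be a prime power, F a finite field with q elements, and n an integer with n ≥ 2. Then |Sp_{2n}(F)| = (q^{2n} − 1) · q^{2n−1} · |Sp_{2n−2}(F)|. -/
open Matrix

/-- The symplectic group of 2m×2m matrices M over F with M J Mᵀ = J,
where J = [[0, I],[−I, 0]]. -/
def Sp (F : Type*) [Field F] (m : ℕ) :
    Set (Matrix (Fin m ⊕ Fin m) (Fin m ⊕ Fin m) F) :=
  {M | M * Matrix.fromBlocks 0 1 (-1) 0 * Mᵀ = Matrix.fromBlocks 0 1 (-1) 0}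

namespace SpAux

open Matrix

variable {F : Type*} [Field F]

/-- skew symmetry from the alternating property -/
lemma skew {ι : Type*} [Fintype ι] (G : Matrix ι ι F)
    (halt : ∀ x : ι → F, x ⬝ᵥ G *ᵥ x = 0) (x y : ι → F) :
    x ⬝ᵥ G *ᵥ y = -(y ⬝ᵥ G *ᵥ x) := by
  have h := halt (x + y)
  simp only [add_dotProduct, mulVec_add, dotProduct_add, halt x, halt y] at h
  linear_combination h

/-- Existence of symplectic bases for alternating nondegenerate forms: statement. -/
def SympEx (F : Type*) [Field F] (k : ℕ) : Prop :=
  ∀ (ι : Type) (_ : Fintype ι) (_ : DecidableEq ι) (G : Matrix ι ι F),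
    Fintype.card ι = 2 * k → (∀ x, x ⬝ᵥ G *ᵥ x = 0) → IsUnit G.det →
    ∃ s : Fin k ⊕ Fin k → ι → F, ∀ a b, s a ⬝ᵥ G *ᵥ s b = J (Fin k) F a b

lemma vecMul_ne_zero {ι : Type*} [Fintype ι] [DecidableEq ι] {G : Matrix ι ι F}
    (hdet : IsUnit G.det) {x : ι → F} (hx : x ≠ 0) : x ᵥ* G ≠ 0 := by
  intro h
  apply hx
  have : (x ᵥ* G) ᵥ* G⁻¹ = x := by
    rw [vecMul_vecMul, Matrix.mul_nonsing_inv _ hdet, vecMul_one]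
  rw [h] at this
  rw [← this, zero_vecMul]

lemma symp_step (k : ℕ) (IH : SympEx F k) (ι : Type) [Fintype ι] [DecidableEq ι]
    (G : Matrix ι ι F) (hcard : Fintype.card ι = 2 * (k + 1))
    (halt : ∀ x, x ⬝ᵥ G *ᵥ x = 0) (hdet : IsUnit G.det)
    (u v : ι → F) (huv : u ⬝ᵥ G *ᵥ v = -1) :
    ∃ r : Fin (k + 1) ⊕ Fin (k + 1) → ι → F, r (Sum.inl 0) = u ∧ r (Sum.inr 0) = v ∧
      ∀ a b, r a ⬝ᵥ G *ᵥ r b = J (Fin (k + 1)) F a b := by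
  classical
  set B : ((ι → F) →ₗ[F] (ι → F) →ₗ[F] F) := Matrix.toLinearMap₂' F G with hBdef
  have hB : ∀ x y, B x y = x ⬝ᵥ G *ᵥ y := fun x y => Matrix.toLinearMap₂'_apply' G x y
  have hskew : ∀ x y, B x y = -(B y x) := by
    intro x y; rw [hB, hB]; exact skew G halt x y
  have hBuu : B u u = 0 := by rw [hB]; exact halt u
  have hBvv : B v v = 0 := by rw [hB]; exact halt v
  have hBuv : B u v = -1 := by rw [hB]; exact huv
  have hBvu : B v u = 1 := by rw [hskew, hBuv]; ring
  set φ : (ι → F) →ₗ[F] F × F := LinearMap.prod (B u) (B v) with hφdef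
  have hφ_apply : ∀ y, φ y = (B u y, B v y) := fun y => rfl
  have hsurj : Function.Surjective φ := by
    intro p
    refine ⟨p.2 • u + (-p.1) • v, ?_⟩
    rw [hφ_apply]
    simp only [map_add, _root_.map_smul, hBuu, hBuv, hBvv, hBvu, smul_eq_mul]
    obtain ⟨p1, p2⟩ := p
    simp only [Prod.mk.injEq]
    constructor <;> ring
  set W := LinearMap.ker φ with hWdef
  have hmemW : ∀ {y}, y ∈ W ↔ (B u y = 0 ∧ B v y = 0) := by
    intro y
    rw [hWdef, LinearMap.mem_ker, hφ_apply, Prod.mk_eq_zero]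
  have hrk : Module.finrank F W = 2 * k := by
    have h1 := LinearMap.finrank_range_add_finrank_ker φ
    rw [LinearMap.range_eq_top.mpr hsurj, finrank_top] at h1
    have h2 : Module.finrank F (F × F) = 2 := by
      simp [Module.finrank_prod]
    have h3 : Module.finrank F (ι → F) = Fintype.card ι := Module.finrank_pi F
    rw [hWdef]
    omega
  set e : Fin (Module.finrank F W) ≃ Fin k ⊕ Fin k :=
    (finCongr hrk).trans ((finCongr (two_mul k)).trans finSumFinEquiv.symm) with hedef
  set bW := (Module.finBasis F ↥W).reindex e with hbWdef
  set c : Fin k ⊕ Fin k → ι → F := fun t => (bW t : ι → F) with hcdef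
  have hcW : ∀ t, (c t : ι → F) ∈ W := fun t => (bW t).2
  set G' : Matrix (Fin k ⊕ Fin k) (Fin k ⊕ Fin k) F := Matrix.of fun a b => B (c a) (c b)
    with hG'def
  have hG' : ∀ a b, G' a b = B (c a) (c b) := fun _ _ => rfl
  have hexpand : ∀ (x y : Fin k ⊕ Fin k → F),
      x ⬝ᵥ G' *ᵥ y = B (∑ t, x t • c t) (∑ t, y t • c t) := by
    intro x y
    simp only [map_sum, LinearMap.sum_apply, _root_.map_smul, LinearMap.smul_apply, smul_eq_mul,
      dotProduct, mulVec, hG'def, Matrix.of_apply, Finset.mul_sum]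
    rw [Finset.sum_comm]
    exact Finset.sum_congr rfl fun t _ => Finset.sum_congr rfl fun t' _ => by ring
  have halt' : ∀ x, x ⬝ᵥ G' *ᵥ x = 0 := by
    intro x; rw [hexpand, hB]; exact halt _
  have hdet' : IsUnit G'.det := by
    by_contra hcon
    have hdet0 : G'.det = 0 := by simpa [isUnit_iff_ne_zero] using hcon
    obtain ⟨x, hx0, hxz⟩ := (Matrix.exists_mulVec_eq_zero_iff).mpr hdet0
    set wW : W := ∑ t, x t • bW t with hwWdef
    have hw : (wW : ι → F) = ∑ t, x t • c t := by
      rw [hwWdef]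
      push_cast [Submodule.coe_sum]
      rfl
    have hcw : ∀ a, B (c a) (wW : ι → F) = 0 := by
      intro a
      have := congrFun hxz a
      have hexp1 : (G' *ᵥ x) a = B (c a) (∑ t, x t • c t) := by
        simp only [mulVec, dotProduct, map_sum, _root_.map_smul, smul_eq_mul, hG'def, Matrix.of_apply]
        exact Finset.sum_congr rfl fun t _ => by ring
      rw [hexp1] at this
      rw [hw]
      simpa using this
    have hwc : ∀ a, B (wW : ι → F) (c a) = 0 := by
      intro a; rw [hskew, hcw a, neg_zero]
    have hker : (B (wW : ι → F)).comp W.subtype = 0 := by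
      apply Module.Basis.ext bW
      intro t
      simp only [LinearMap.comp_apply, Submodule.subtype_apply, LinearMap.zero_apply]
      exact hwc t
    have hwW_mem : (wW : ι → F) ∈ W := wW.2
    have hwall : ∀ y, B (wW : ι → F) y = 0 := by
      intro y
      have hyd : y - (B v y) • u - (-(B u y)) • v ∈ W := by
        rw [hmemW]
        constructor
        · simp only [map_sub, _root_.map_smul, hBuu, hBuv, smul_eq_mul]; ring
        · simp only [map_sub, _root_.map_smul, hBvv, hBvu, smul_eq_mul]; ring
      have hdec : y = (B v y) • u + (-(B u y)) • v + (y - (B v y) • u - (-(B u y)) • v) := by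
        abel
      rw [hdec]
      have h1 : B (wW : ι → F) u = 0 := by
        rw [hskew]; rw [(hmemW.mp hwW_mem).1, neg_zero]
      have h2 : B (wW : ι → F) v = 0 := by
        rw [hskew]; rw [(hmemW.mp hwW_mem).2, neg_zero]
      have h3 : B (wW : ι → F) (y - (B v y) • u - (-(B u y)) • v) = 0 := by
        have := congrFun (congrArg DFunLike.coe hker) ⟨_, hyd⟩
        simpa using this
      simp only [map_add, _root_.map_smul, h1, h2, h3, smul_eq_mul, mul_zero, add_zero, zero_add]
    have hGw : (wW : ι → F) ᵥ* G = 0 := by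
      funext j
      have := hwall (Pi.single j 1)
      rw [hB, dotProduct_mulVec, dotProduct_single, mul_one] at this
      exact this
    have hw0 : (wW : ι → F) = 0 := by
      by_contra h
      exact vecMul_ne_zero hdet h hGw
    have hwW0 : wW = 0 := by
      exact Subtype.ext hw0
    have hxzero : x = 0 := by
      have hli := bW.linearIndependent
      rw [Fintype.linearIndependent_iff] at hli
      have := hli x (by rw [← hwWdef, hwW0])
      funext t; exact this t
    exact hx0 hxzero
  obtain ⟨s, hs⟩ := IH (Fin k ⊕ Fin k) _ _ G' (by simp [two_mul]) halt' hdet'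
  set d : Fin k ⊕ Fin k → ι → F := fun a => ∑ t, s a t • c t with hddef
  have hdmem : ∀ a, d a ∈ W := by
    intro a
    exact Submodule.sum_mem _ fun t _ => Submodule.smul_mem _ _ (hcW t)
  have hBud : ∀ a, B u (d a) = 0 := fun a => (hmemW.mp (hdmem a)).1
  have hBvd : ∀ a, B v (d a) = 0 := fun a => (hmemW.mp (hdmem a)).2
  have hBdu : ∀ a, B (d a) u = 0 := by intro a; rw [hskew, hBud, neg_zero]
  have hBdv : ∀ a, B (d a) v = 0 := by intro a; rw [hskew, hBvd, neg_zero]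
  have hBdd : ∀ a b, B (d a) (d b) = J (Fin k) F a b := by
    intro a b
    have : B (d a) (d b) = s a ⬝ᵥ G' *ᵥ s b := (hexpand (s a) (s b)).symm
    rw [this, hs]
  refine ⟨Sum.elim (Fin.cases u fun i => d (Sum.inl i)) (Fin.cases v fun i => d (Sum.inr i)),
    by simp, by simp, ?_⟩
  intro a b
  rw [← hB]
  rcases a with a | a <;> rcases b with b | b <;>
    induction a using Fin.cases <;> induction b using Fin.cases <;>
    simp [hBuu, hBuv, hBvu, hBvv, hBud, hBvd, hBdu, hBdv, hBdd,
      Matrix.J, fromBlocks, Matrix.one_apply, Fin.succ_inj]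
  all_goals simp [eq_comm, Fin.succ_ne_zero]

lemma symp_ex (k : ℕ) : SympEx F k := by
  induction k with
  | zero =>
    intro ι _ _ G hcard halt hdet
    refine ⟨fun a => 0, fun a b => ?_⟩
    rcases a with a | a <;> exact a.elim0
  | succ k IH =>
    intro ι _ _ G hcard halt hdet
    have hne : Nonempty ι := by
      rw [← Fintype.card_pos_iff, hcard]; omega
    obtain ⟨i0⟩ := hne
    set u : ι → F := Pi.single i0 1 with hu_def
    have hu : u ≠ 0 := by
      intro h
      have := congrFun h i0
      simp [hu_def] at this
    have hvG : u ᵥ* G ≠ 0 := vecMul_ne_zero hdet hu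
    obtain ⟨j, hj⟩ := Function.ne_iff.mp hvG
    set c : F := (u ᵥ* G) j with hc_def
    have hc : c ≠ 0 := by simpa using hj
    set v : ι → F := (-c⁻¹) • (Pi.single j 1 : ι → F) with hv_def
    have huv : u ⬝ᵥ G *ᵥ v = -1 := by
      rw [dotProduct_mulVec, hv_def, dotProduct_smul, dotProduct_single]
      rw [smul_eq_mul, ← hc_def, mul_one, neg_mul, inv_mul_cancel₀ hc]
    obtain ⟨r, -, -, hr⟩ := symp_step k IH ι G hcard halt hdet u v huv
    exact ⟨r, hr⟩

lemma J_alt (l : Type*) [Fintype l] [DecidableEq l] (x : l ⊕ l → F) :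
    x ⬝ᵥ (J l F) *ᵥ x = 0 := by
  have h1 : ∀ i, ((J l F) *ᵥ x) (Sum.inl i) = -x (Sum.inr i) := by
    intro i
    simp [Matrix.J, mulVec, dotProduct, Fintype.sum_sum_type, fromBlocks, Matrix.one_apply]
  have h2 : ∀ i, ((J l F) *ᵥ x) (Sum.inr i) = x (Sum.inl i) := by
    intro i
    simp [Matrix.J, mulVec, dotProduct, Fintype.sum_sum_type, fromBlocks, Matrix.one_apply]
  rw [dotProduct, Fintype.sum_sum_type]
  simp only [h1, h2]
  rw [← Finset.sum_add_distrib]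
  exact Finset.sum_eq_zero fun i _ => by ring

lemma rows_pair {ι κ : Type*} [Fintype ι] [Fintype κ] (r : κ → ι → F) (G : Matrix ι ι F)
    (a b : κ) : (Matrix.of r * G * (Matrix.of r)ᵀ) a b = r a ⬝ᵥ G *ᵥ r b := by
  simp only [Matrix.mul_apply, mulVec, dotProduct, transpose_apply, Matrix.of_apply,
    Finset.sum_mul, Finset.mul_sum]
  rw [Finset.sum_comm]
  exact Finset.sum_congr rfl fun t _ => Finset.sum_congr rfl fun t' _ => by ring

lemma exists_extend (k : ℕ) (u v : Fin (k + 1) ⊕ Fin (k + 1) → F)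
    (huv : u ⬝ᵥ (J (Fin (k + 1)) F) *ᵥ v = -1) :
    ∃ M ∈ symplecticGroup (Fin (k + 1)) F,
      M *ᵥ Pi.single (Sum.inl 0) 1 = u ∧ M *ᵥ Pi.single (Sum.inr 0) 1 = v := by
  obtain ⟨r, hr1, hr2, hr⟩ := symp_step k (symp_ex k) (Fin (k + 1) ⊕ Fin (k + 1))
    (J (Fin (k + 1)) F) (by simp [two_mul]) (J_alt _) (isUnit_det_J _ _) u v huv
  have hNmem : Matrix.of r ∈ symplecticGroup (Fin (k + 1)) F := by
    rw [SymplecticGroup.mem_iff]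
    ext a b
    rw [rows_pair, hr]
  refine ⟨(Matrix.of r)ᵀ, SymplecticGroup.transpose_mem hNmem, ?_, ?_⟩
  · rw [mulVec_single_one, Matrix.col, transpose_transpose]
    exact hr1
  · rw [mulVec_single_one, Matrix.col, transpose_transpose]
    exact hr2

/-- reindexing equivalence splitting off the first basis vectors -/
def sigmaEq (k : ℕ) : (Fin 1 ⊕ Fin 1) ⊕ (Fin k ⊕ Fin k) ≃ Fin (k + 1) ⊕ Fin (k + 1) where
  toFun := Sum.elim (Sum.elim (fun _ => Sum.inl 0) (fun _ => Sum.inr 0))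
      (Sum.elim (fun a => Sum.inl a.succ) (fun a => Sum.inr a.succ))
  invFun := Sum.elim (Fin.cases (Sum.inl (Sum.inl 0)) (fun a => Sum.inr (Sum.inl a)))
      (Fin.cases (Sum.inl (Sum.inr 0)) (fun a => Sum.inr (Sum.inr a)))
  left_inv := by
    rintro ((x | x) | (x | x)) <;> simp [Fin.eq_zero]
  right_inv := by
    rintro (x | x) <;> induction x using Fin.cases <;> simp

lemma J_submatrix (k : ℕ) : (J (Fin (k + 1)) F).submatrix (sigmaEq k) (sigmaEq k)
    = fromBlocks (J (Fin 1) F) 0 0 (J (Fin k) F) := by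
  ext a b
  rcases a with (a | a) | (a | a) <;> rcases b with (b | b) | (b | b) <;>
    simp [sigmaEq, Matrix.J, fromBlocks, Matrix.one_apply, Fin.succ_ne_zero, eq_comm,
      Fin.eq_zero, Fin.succ_inj]

lemma J_mulVec_single₁ (k : ℕ) :
    (J (Fin (k + 1)) F) *ᵥ Pi.single (Sum.inl 0) 1 = Pi.single (Sum.inr 0) 1 := by
  funext i
  rcases i with i | i <;>
    simp [Matrix.J, fromBlocks, Matrix.one_apply, Pi.single_apply, eq_comm]

lemma J_mulVec_single₂ (k : ℕ) :
    (J (Fin (k + 1)) F) *ᵥ Pi.single (Sum.inr 0) 1 = -Pi.single (Sum.inl 0) 1 := by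
  funext i
  rcases i with i | i <;>
    simp [Matrix.J, fromBlocks, Matrix.one_apply, Pi.single_apply, eq_comm]

lemma stab_rows (k : ℕ) {g : Matrix (Fin (k + 1) ⊕ Fin (k + 1)) (Fin (k + 1) ⊕ Fin (k + 1)) F}
    (hg : g ∈ symplecticGroup (Fin (k + 1)) F)
    (h1 : g *ᵥ Pi.single (Sum.inl 0) 1 = Pi.single (Sum.inl 0) 1)
    (h2 : g *ᵥ Pi.single (Sum.inr 0) 1 = Pi.single (Sum.inr 0) 1) :
    g (Sum.inl 0) = Pi.single (Sum.inl 0) 1 ∧ g (Sum.inr 0) = Pi.single (Sum.inr 0) 1 := by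
  have hmem := SymplecticGroup.mem_iff'.mp hg
  constructor
  · have h := congrArg (fun M => M *ᵥ Pi.single (Sum.inr 0) (1 : F)) hmem
    rw [← mulVec_mulVec, ← mulVec_mulVec, h2, J_mulVec_single₂,
      mulVec_neg, mulVec_single_one, Matrix.col, transpose_transpose] at h
    exact neg_injective h
  · have h := congrArg (fun M => M *ᵥ Pi.single (Sum.inl 0) (1 : F)) hmem
    rw [← mulVec_mulVec, ← mulVec_mulVec, h1, J_mulVec_single₁,
      mulVec_single_one, Matrix.col, transpose_transpose] at h
    exact h

lemma stab_decomp (k : ℕ) {g : Matrix (Fin (k + 1) ⊕ Fin (k + 1)) (Fin (k + 1) ⊕ Fin (k + 1)) F}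
    (hg : g ∈ symplecticGroup (Fin (k + 1)) F)
    (h1 : g *ᵥ Pi.single (Sum.inl 0) 1 = Pi.single (Sum.inl 0) 1)
    (h2 : g *ᵥ Pi.single (Sum.inr 0) 1 = Pi.single (Sum.inr 0) 1) :
    g.submatrix (sigmaEq k) (sigmaEq k) =
      fromBlocks 1 0 0 ((g.submatrix (sigmaEq k) (sigmaEq k)).toBlocks₂₂) := by
  obtain ⟨hr1, hr2⟩ := stab_rows k hg h1 h2
  have hc1 : ∀ i, g i (Sum.inl 0)
      = (Pi.single (Sum.inl 0) 1 : Fin (k + 1) ⊕ Fin (k + 1) → F) i := by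
    intro i
    have := congrFun h1 i
    simpa using this
  have hc2 : ∀ i, g i (Sum.inr 0)
      = (Pi.single (Sum.inr 0) 1 : Fin (k + 1) ⊕ Fin (k + 1) → F) i := by
    intro i
    have := congrFun h2 i
    simpa using this
  ext a b
  rcases a with (a | a) | (a | a) <;> rcases b with (b | b) | (b | b) <;>
    simp [sigmaEq, submatrix_apply, fromBlocks, toBlocks₂₂, Matrix.one_apply,
      Fin.eq_zero, hc1, hc2,
      congrFun hr1, congrFun hr2, Pi.single_apply, Fin.succ_ne_zero, eq_comm]

lemma submatrix_cancel {α : Type*} {ι κ : Type*} (e : ι ≃ κ)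
    {M N : Matrix κ κ α} (h : M.submatrix e e = N.submatrix e e) : M = N := by
  ext i j
  have := congrFun (congrFun h (e.symm i)) (e.symm j)
  simpa using this

lemma mem_iff_submatrix (k : ℕ)
    (g : Matrix (Fin (k + 1) ⊕ Fin (k + 1)) (Fin (k + 1) ⊕ Fin (k + 1)) F) :
    g ∈ symplecticGroup (Fin (k + 1)) F ↔
      g.submatrix (sigmaEq k) (sigmaEq k) * fromBlocks (J (Fin 1) F) 0 0 (J (Fin k) F) *
        (g.submatrix (sigmaEq k) (sigmaEq k))ᵀ
        = fromBlocks (J (Fin 1) F) 0 0 (J (Fin k) F) := by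
  rw [SymplecticGroup.mem_iff, ← J_submatrix, transpose_submatrix,
    submatrix_mul_equiv, submatrix_mul_equiv]
  constructor
  · intro h; rw [h]
  · intro h; exact submatrix_cancel (sigmaEq k) h

instance sympAction (l : Type*) [Fintype l] [DecidableEq l] :
    MulAction ↥(symplecticGroup l F) ((l ⊕ l → F) × (l ⊕ l → F)) where
  smul g p := (g.1 *ᵥ p.1, g.1 *ᵥ p.2)
  one_smul p := by
    show ((1 : ↥(symplecticGroup l F)).1 *ᵥ p.1, (1 : ↥(symplecticGroup l F)).1 *ᵥ p.2) = p
    simp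
  mul_smul g h p := by
    show ((g * h).1 *ᵥ p.1, (g * h).1 *ᵥ p.2)
      = (g.1 *ᵥ (h.1 *ᵥ p.1), g.1 *ᵥ (h.1 *ᵥ p.2))
    simp [mulVec_mulVec]

/-- The stabilizer of the standard hyperbolic pair is the smaller symplectic group. -/
noncomputable def stabEquiv (k : ℕ) :
    ↥(MulAction.stabilizer ↥(symplecticGroup (Fin (k + 1)) F)
        ((Pi.single (Sum.inl 0) 1, Pi.single (Sum.inr 0) 1) :
          (Fin (k + 1) ⊕ Fin (k + 1) → F) × (Fin (k + 1) ⊕ Fin (k + 1) → F))) ≃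
      ↥(symplecticGroup (Fin k) F) where
  toFun g := ⟨(g.1.1.submatrix (sigmaEq k) (sigmaEq k)).toBlocks₂₂, by
    have hg := g.1.2
    have hs : _ = _ := g.2
    have h1 : g.1.1 *ᵥ Pi.single (Sum.inl 0) 1 = Pi.single (Sum.inl 0) 1 :=
      congrArg Prod.fst hs
    have h2 : g.1.1 *ᵥ Pi.single (Sum.inr 0) 1 = Pi.single (Sum.inr 0) 1 :=
      congrArg Prod.snd hs
    have hdec := stab_decomp k hg h1 h2
    have hm := (mem_iff_submatrix k g.1.1).mp hg
    rw [hdec, fromBlocks_transpose, fromBlocks_multiply, fromBlocks_multiply] at hm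
    simp only [Matrix.mul_zero, Matrix.zero_mul, Matrix.mul_one, Matrix.one_mul,
      add_zero, zero_add, transpose_zero, transpose_one] at hm
    rw [SymplecticGroup.mem_iff]
    exact (fromBlocks_inj.mp hm).2.2.2⟩
  invFun A := ⟨⟨(fromBlocks 1 0 0 A.1).submatrix (sigmaEq k).symm (sigmaEq k).symm, by
      rw [mem_iff_submatrix k]
      rw [submatrix_submatrix, Equiv.symm_comp_self, submatrix_id_id,
        fromBlocks_transpose, fromBlocks_multiply, fromBlocks_multiply]
      simp only [Matrix.mul_zero, Matrix.zero_mul, Matrix.mul_one, Matrix.one_mul,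
        add_zero, zero_add, transpose_zero, transpose_one]
      have hA := SymplecticGroup.mem_iff.mp A.2
      rw [hA]⟩, by
    rw [MulAction.mem_stabilizer_iff]
    have key : ∀ (j0 : Fin (k + 1) ⊕ Fin (k + 1)),
        (sigmaEq k).symm j0 = Sum.inl (Sum.inl 0) ∨ (sigmaEq k).symm j0 = Sum.inl (Sum.inr 0) →
        True := fun _ _ => trivial
    refine Prod.ext ?_ ?_ <;>
    · show (fromBlocks 1 0 0 A.1).submatrix (sigmaEq k).symm (sigmaEq k).symm *ᵥ _ = _
      funext i
      obtain ⟨t, rfl⟩ := (sigmaEq k).surjective i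
      rcases t with (x | x) | (x | x) <;>
        simp [sigmaEq, fromBlocks, Matrix.one_apply, Pi.single_apply, Fin.eq_zero,
          Fin.succ_ne_zero, eq_comm]⟩
  left_inv g := by
    apply Subtype.ext
    apply Subtype.ext
    have hg := g.1.2
    have hs : _ = _ := g.2
    have h1 : g.1.1 *ᵥ Pi.single (Sum.inl 0) 1 = Pi.single (Sum.inl 0) 1 :=
      congrArg Prod.fst hs
    have h2 : g.1.1 *ᵥ Pi.single (Sum.inr 0) 1 = Pi.single (Sum.inr 0) 1 :=
      congrArg Prod.snd hs
    show (fromBlocks 1 0 0 _).submatrix _ _ = g.1.1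
    rw [← stab_decomp k hg h1 h2]
    rw [submatrix_submatrix, Equiv.self_comp_symm, submatrix_id_id]
  right_inv A := by
    apply Subtype.ext
    show ((((fromBlocks 1 0 0 A.1).submatrix (sigmaEq k).symm (sigmaEq k).symm).submatrix
        (sigmaEq k) (sigmaEq k)).toBlocks₂₂) = A.1
    rw [submatrix_submatrix, Equiv.symm_comp_self, submatrix_id_id, toBlocks_fromBlocks₂₂]

lemma orbit_eq (k : ℕ) :
    MulAction.orbit ↥(symplecticGroup (Fin (k + 1)) F)
        ((Pi.single (Sum.inl 0) 1, Pi.single (Sum.inr 0) 1) :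
          (Fin (k + 1) ⊕ Fin (k + 1) → F) × (Fin (k + 1) ⊕ Fin (k + 1) → F))
      = {p : (Fin (k + 1) ⊕ Fin (k + 1) → F) × (Fin (k + 1) ⊕ Fin (k + 1) → F) |
          p.1 ⬝ᵥ (J (Fin (k + 1)) F) *ᵥ p.2 = -1} := by
  ext p
  constructor
  · rintro ⟨g, rfl⟩
    show (g.1 *ᵥ _) ⬝ᵥ _ *ᵥ (g.1 *ᵥ _) = -1
    have hpres : ∀ x y : Fin (k + 1) ⊕ Fin (k + 1) → F,
        (g.1 *ᵥ x) ⬝ᵥ (J (Fin (k + 1)) F) *ᵥ (g.1 *ᵥ y)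
          = x ⬝ᵥ (J (Fin (k + 1)) F) *ᵥ y := by
      intro x y
      rw [mulVec_mulVec, dotProduct_mulVec, ← vecMul_transpose, vecMul_vecMul,
        ← Matrix.mul_assoc, SymplecticGroup.mem_iff'.mp g.2, ← dotProduct_mulVec]
    rw [hpres, J_mulVec_single₂, dotProduct_neg, single_dotProduct]
    simp
  · intro hp
    obtain ⟨M, hM, hM1, hM2⟩ := exists_extend k p.1 p.2 hp
    refine MulAction.mem_orbit_iff.mpr ⟨⟨M, hM⟩, ?_⟩
    show (M *ᵥ _, M *ᵥ _) = p
    rw [hM1, hM2]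

lemma nat_card_sigma {ι : Type*} [Fintype ι] (f : ι → Type*) [∀ i, Fintype (f i)] :
    Nat.card (Σ i, f i) = ∑ i, Nat.card (f i) := by
  simp [Nat.card_eq_fintype_card]

lemma fiber_card [Fintype F] {ι : Type} [Fintype ι] [DecidableEq ι]
    (ℓ : (ι → F) →ₗ[F] F) (hℓ : ℓ ≠ 0) (cv : F) :
    Nat.card {y : ι → F | ℓ y = cv} = Fintype.card F ^ (Fintype.card ι - 1) := by
  classical
  obtain ⟨z, hz⟩ : ∃ z, ℓ z ≠ 0 := by
    by_contra h
    push_neg at h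
    exact hℓ (LinearMap.ext fun y => by rw [h y]; rfl)
  have hsurj : Function.Surjective ℓ := by
    intro a
    refine ⟨(a / ℓ z) • z, ?_⟩
    rw [_root_.map_smul, smul_eq_mul, div_mul_cancel₀ _ hz]
  obtain ⟨y0, hy0⟩ := hsurj cv
  have e : {y : ι → F | ℓ y = cv} ≃ ↥(LinearMap.ker ℓ) :=
    { toFun := fun y => ⟨y.1 - y0, by
        rw [LinearMap.mem_ker, map_sub, y.2, hy0, sub_self]⟩
      invFun := fun z => ⟨z.1 + y0, by
        have hz' := LinearMap.mem_ker.mp z.2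
        simp [map_add, hz', hy0]⟩
      left_inv := fun y => by ext; simp
      right_inv := fun z => by ext; simp }
  rw [Nat.card_congr e, Nat.card_eq_fintype_card]
  have hrank : Module.finrank F ↥(LinearMap.ker ℓ) = Fintype.card ι - 1 := by
    have h1 := LinearMap.finrank_range_add_finrank_ker ℓ
    rw [LinearMap.range_eq_top.mpr hsurj, finrank_top, Module.finrank_self] at h1
    have h3 : Module.finrank F (ι → F) = Fintype.card ι := Module.finrank_pi F
    omega
  rw [← hrank]
  exact Module.card_eq_pow_finrank

lemma hyp_card [Fintype F] (k : ℕ) :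
    Nat.card {p : (Fin (k + 1) ⊕ Fin (k + 1) → F) × (Fin (k + 1) ⊕ Fin (k + 1) → F) |
        p.1 ⬝ᵥ (J (Fin (k + 1)) F) *ᵥ p.2 = -1}
      = (Fintype.card F ^ (2 * (k + 1)) - 1) * Fintype.card F ^ (2 * (k + 1) - 1) := by
  classical
  have e1 := Equiv.subtypeProdEquivSigmaSubtype
    (fun (x y : Fin (k + 1) ⊕ Fin (k + 1) → F) => x ⬝ᵥ (J (Fin (k + 1)) F) *ᵥ y = -1)
  have h0 : Nat.card {p : (Fin (k + 1) ⊕ Fin (k + 1) → F) × (Fin (k + 1) ⊕ Fin (k + 1) → F) |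
        p.1 ⬝ᵥ (J (Fin (k + 1)) F) *ᵥ p.2 = -1}
      = ∑ x : Fin (k + 1) ⊕ Fin (k + 1) → F,
          Nat.card {y : Fin (k + 1) ⊕ Fin (k + 1) → F | x ⬝ᵥ (J (Fin (k + 1)) F) *ᵥ y = -1} := by
    rw [← nat_card_sigma]
    exact Nat.card_congr e1
  rw [h0]
  have hcard : ∀ x : Fin (k + 1) ⊕ Fin (k + 1) → F,
      Nat.card {y : Fin (k + 1) ⊕ Fin (k + 1) → F | x ⬝ᵥ (J (Fin (k + 1)) F) *ᵥ y = -1}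
        = if x = 0 then 0 else Fintype.card F ^ (2 * (k + 1) - 1) := by
    intro x
    by_cases hx : x = 0
    · rw [if_pos hx]
      rw [Nat.card_eq_zero]
      left
      refine ⟨fun y => ?_⟩
      have : (0 : F) = -1 := by
        have hy := y.2
        simpa [hx] using hy
      exact one_ne_zero (neg_injective (by simpa using this.symm) : (1 : F) = 0)
    · rw [if_neg hx]
      set ℓ : (Fin (k + 1) ⊕ Fin (k + 1) → F) →ₗ[F] F :=
        Matrix.toLinearMap₂' F (J (Fin (k + 1)) F) x with hℓdef
      have happ : ∀ y, ℓ y = x ⬝ᵥ (J (Fin (k + 1)) F) *ᵥ y :=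
        fun y => Matrix.toLinearMap₂'_apply' _ x y
      have hℓ : ℓ ≠ 0 := by
        intro h0
        apply vecMul_ne_zero (isUnit_det_J (Fin (k + 1)) F) hx
        funext j
        have := happ (Pi.single j 1)
        rw [h0] at this
        have h2 : (0 : F) = x ⬝ᵥ (J (Fin (k + 1)) F) *ᵥ Pi.single j 1 := this
        rw [dotProduct_mulVec, dotProduct_single, mul_one] at h2
        exact h2.symm
      have hfc := fiber_card ℓ hℓ (-1)
      have hsetEq : {y : Fin (k + 1) ⊕ Fin (k + 1) → F |
          x ⬝ᵥ (J (Fin (k + 1)) F) *ᵥ y = -1} = {y | ℓ y = -1} := by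
        ext y; simp [happ y]
      rw [hsetEq, hfc]
      congr 1
      simp [two_mul]
  rw [Finset.sum_congr rfl fun x _ => hcard x]
  rw [Finset.sum_ite, Finset.sum_const, Finset.sum_const]
  rw [Finset.filter_ne', Finset.card_erase_of_mem (Finset.mem_univ _)]
  simp only [smul_eq_mul, mul_zero, zero_add, Finset.card_univ, smul_eq_mul]
  congr 2
  · rw [Fintype.card_fun]
    congr 1
    simp [two_mul]

lemma sp_eq_symplectic (m : ℕ) : Sp F m = ↑(symplecticGroup (Fin m) F) := by
  ext M
  have hJ : (J (Fin m) F) = -(fromBlocks 0 1 (-1) 0 :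
      Matrix (Fin m ⊕ Fin m) (Fin m ⊕ Fin m) F) := by
    rw [Matrix.J, fromBlocks_neg]
    norm_num
  simp only [Sp, Set.mem_setOf_eq, SetLike.mem_coe, SymplecticGroup.mem_iff, hJ,
    Matrix.mul_neg, Matrix.neg_mul, neg_inj]

lemma card_sp (m : ℕ) : Nat.card (Sp F m) = Nat.card ↥(symplecticGroup (Fin m) F) := by
  apply Nat.card_congr
  exact Equiv.subtypeEquivRight fun M => by
    rw [← SetLike.mem_coe, ← sp_eq_symplectic m]

end SpAux

/-- The recursion |Sp_{2n}(F_q)| = (q^{2n} − 1) q^{2n−1} |Sp_{2n−2}(F_q)|. -/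
theorem stmt_4 (q n : ℕ) (hq : IsPrimePow q) (hn : 2 ≤ n)
    (F : Type*) [Field F] [Fintype F] (hF : Fintype.card F = q) :
    Nat.card (Sp F n) = (q ^ (2 * n) - 1) * q ^ (2 * n - 1) * Nat.card (Sp F (n - 1)) := by
  obtain ⟨k, rfl⟩ : ∃ k, n = k + 1 := ⟨n - 1, by omega⟩
  rw [SpAux.card_sp, Nat.add_sub_cancel, SpAux.card_sp]
  rw [Subgroup.card_eq_card_quotient_mul_card_subgroup
    (MulAction.stabilizer ↥(symplecticGroup (Fin (k + 1)) F)
      ((Pi.single (Sum.inl 0) 1, Pi.single (Sum.inr 0) 1) :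
        (Fin (k + 1) ⊕ Fin (k + 1) → F) × (Fin (k + 1) ⊕ Fin (k + 1) → F)))]
  rw [← Nat.card_congr (MulAction.orbitEquivQuotientStabilizer
    ↥(symplecticGroup (Fin (k + 1)) F)
      ((Pi.single (Sum.inl 0) 1, Pi.single (Sum.inr 0) 1) :
        (Fin (k + 1) ⊕ Fin (k + 1) → F) × (Fin (k + 1) ⊕ Fin (k + 1) → F)))]
  rw [Nat.card_congr (SpAux.stabEquiv k)]
  rw [SpAux.orbit_eq k]
  rw [SpAux.hyp_card k, hF]
end
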